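/- Every centrally symmetric subdivision S of a regular 2n-gon P admits a longest diagonal l of P that crosses no diagonal of S (where l may itself belong to S). -/

import Mathlib

/-- `x` lies strictly inside the counterclockwise open arc from `a` to `b`
on the cycle `ℤ/mℤ`. -/
def Betw {m : ℕ} (a b x : ZMod m) : Prop :=
  x ≠ a ∧ (x - a).val < (b - a).val

/-- Two chords of a convex `m`-gon (with vertices `ℤ/mℤ`) cross, i.e. are distinct and
share interior points. -/
def Crosses {m : ℕ} (p q : Sym2 (ZMod m)) : Prop :=
  ∃ a b c d : ZMod m, p = s(a, b) ∧ q = s(c, d) ∧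
    a ≠ c ∧ a ≠ d ∧ b ≠ c ∧ b ≠ d ∧ (Betw a b c ↔ ¬ Betw a b d)

/-- A diagonal of the `m`-gon: an unordered pair of distinct, non-adjacent vertices. -/
def IsDiagonal {m : ℕ} (p : Sym2 (ZMod m)) : Prop :=
  ∃ a b : ZMod m, p = s(a, b) ∧ a ≠ b ∧ a - b ≠ 1 ∧ b - a ≠ 1

section Helpers

variable {n : ℕ}

private lemma negN (hn : 3 ≤ n) : -((n : ZMod (2*n))) = (n : ZMod (2*n)) := by
  have h : (n : ZMod (2*n)) + n = 0 := by
    rw [← Nat.cast_add, show n + n = 2*n by ring, ZMod.natCast_self]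
  linear_combination -h

private lemma val_eq_n (hn : 3 ≤ n) {z : ZMod (2*n)} (h : z.val = n) :
    z = (n : ZMod (2*n)) := by
  haveI : NeZero (2*n) := ⟨by omega⟩
  apply ZMod.val_injective
  rw [h, ZMod.val_cast_of_lt (by omega)]

private lemma valshift (hn : 3 ≤ n) {z : ZMod (2*n)} (h0 : z ≠ 0)
    (h1 : z ≠ (n : ZMod (2*n))) : ((z + n).val < n ↔ ¬ (z.val < n)) := by
  haveI : NeZero (2*n) := ⟨by omega⟩
  have hv : (z + n).val = (z.val + n) % (2*n) := by
    rw [ZMod.val_add, ZMod.val_cast_of_lt (show n < 2*n by omega)]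
  have hz0 : z.val ≠ 0 := fun h => h0 ((ZMod.val_eq_zero z).mp h)
  have hzn : z.val ≠ n := fun h => h1 (val_eq_n hn h)
  have hlt : z.val < 2*n := ZMod.val_lt z
  rcases lt_or_gt_of_ne hzn with h | h
  · rw [hv, Nat.mod_eq_of_lt (by omega)]; omega
  · rw [hv, Nat.mod_eq_sub_mod (by omega), Nat.mod_eq_of_lt (by omega)]; omega

private lemma cross_diam (hn : 3 ≤ n) {i u v : ZMod (2*n)}
    (h : Crosses s(i, i + (n : ZMod (2*n))) s(u, v)) :
    u ≠ i ∧ u ≠ i + n ∧ v ≠ i ∧ v ≠ i + n ∧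
      ((u - i).val < n ↔ ¬ ((v - i).val < n)) := by
  haveI : NeZero (2*n) := ⟨by omega⟩
  obtain ⟨a, b, c, d, hp, hq, hac, had, hbc, hbd, hiff⟩ := h
  rw [Sym2.eq_iff] at hp hq
  have hvn : ((n : ZMod (2*n))).val = n := ZMod.val_cast_of_lt (by omega)
  have e1 : i + (n : ZMod (2*n)) - i = (n : ZMod (2*n)) := add_sub_cancel_left i _
  have e2 : i - (i + (n : ZMod (2*n))) = (n : ZMod (2*n)) := by
    rw [show i - (i + (n : ZMod (2*n))) = -((n : ZMod (2*n))) by ring, negN hn]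
  have hshift : ∀ z : ZMod (2*n), z ≠ i → z ≠ i + n →
      ((z - (i + n)).val < n ↔ ¬ ((z - i).val < n)) := by
    intro z hz0 hz1
    rw [show z - (i + (n:ZMod (2*n))) = (z - i) + -((n:ZMod (2*n))) by ring, negN hn]
    exact valshift hn (sub_ne_zero.mpr hz0)
      (fun hc => hz1 (by rw [← hc]; ring))
  rcases hp with ⟨rfl, rfl⟩ | ⟨rfl, rfl⟩ <;> rcases hq with ⟨rfl, rfl⟩ | ⟨rfl, rfl⟩ <;>
    simp only [Betw, e1, e2, hvn] at hiff
  · exact ⟨hac.symm, hbc.symm, had.symm, hbd.symm, by tauto⟩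
  · exact ⟨had.symm, hbd.symm, hac.symm, hbc.symm, by tauto⟩
  · have su := hshift u hbc.symm hac.symm
    have sv := hshift v hbd.symm had.symm
    exact ⟨hbc.symm, hac.symm, hbd.symm, had.symm, by tauto⟩
  · have su := hshift u hbd.symm had.symm
    have sv := hshift v hbc.symm hac.symm
    exact ⟨hbd.symm, had.symm, hbc.symm, hac.symm, by tauto⟩

private lemma crosses_of (hn : 3 ≤ n) {c d x y : ZMod (2*n)}
    (hj : (d - c).val ≤ (y - x).val) (hk : (y - x).val ≤ n - 1)
    (h1 : 0 < (x - c).val) (h2 : (x - c).val < (d - c).val) :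
    Crosses s(c, d) s(x, y) := by
  haveI : NeZero (2*n) := ⟨by omega⟩
  have hjlt : (d - c).val < 2*n := ZMod.val_lt _
  have hyc : (y - c).val = (x - c).val + (y - x).val := by
    rw [show y - c = (x - c) + (y - x) by ring, ZMod.val_add,
      Nat.mod_eq_of_lt (by omega)]
  refine ⟨c, d, x, y, rfl, rfl, ?_, ?_, ?_, ?_, ?_⟩
  · intro h; subst h; simp at h1
  · intro h; subst h; rw [sub_self, ZMod.val_zero] at hyc; omega
  · intro h; subst h; omega
  · intro h; subst h; omega
  · constructor
    · intro _ hB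
      rcases hB with ⟨-, hB2⟩
      omega
    · intro _
      refine ⟨?_, h2⟩
      intro h; rw [h] at h1; simp at h1

end Helpers

/-- Every centrally symmetric subdivision `S` of a regular `2n`-gon (`n ≥ 3`,
vertices `ℤ/2nℤ`, central symmetry `x ↦ x + n`; `S` a set of pairwise noncrossing diagonals
closed under central symmetry) admits a longest diagonal `{i, i+n}` crossing no diagonal of
`S` (the longest diagonal may itself belong to `S`). -/
theorem centrally_symmetric_subdivision_admits_uncrossed_diameter
    (n : ℕ) (hn : 3 ≤ n) (S : Set (Sym2 (ZMod (2 * n))))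
    (hdiag : ∀ d ∈ S, IsDiagonal d)
    (hnc : ∀ d ∈ S, ∀ d' ∈ S, ¬ Crosses d d')
    (hcs : ∀ d ∈ S, Sym2.map (fun x => x + (n : ZMod (2 * n))) d ∈ S) :
    ∃ i : ZMod (2 * n), ∀ d ∈ S, ¬ Crosses s(i, i + (n : ZMod (2 * n))) d := by
  haveI : NeZero (2*n) := ⟨by omega⟩
  by_cases hdia : ∃ d ∈ S, ∃ a : ZMod (2*n), d = s(a, a + (n : ZMod (2*n)))
  · obtain ⟨d, hd, a, rfl⟩ := hdia
    exact ⟨a, fun e he => hnc _ hd e he⟩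
  push_neg at hdia
  rcases Set.eq_empty_or_nonempty S with rfl | hS
  · exact ⟨0, by simp⟩
  have hvn : ((n : ZMod (2*n))).val = n := ZMod.val_cast_of_lt (by omega)
  set g : Sym2 (ZMod (2*n)) → ℕ :=
    Sym2.lift ⟨fun a b => min ((b - a).val) ((a - b).val), fun a b => min_comm _ _⟩ with hg
  have hgab : ∀ a b : ZMod (2*n), g s(a, b) = min ((b - a).val) ((a - b).val) := by
    intro a b; simp [hg]
  -- short representation of every diagonal in S
  have srep : ∀ d ∈ S, ∃ c e : ZMod (2*n), d = s(c, e) ∧ 2 ≤ (e - c).val ∧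
      (e - c).val ≤ n - 1 ∧ g d = (e - c).val := by
    intro d hd
    haveI : Fact (1 < 2*n) := ⟨by omega⟩
    obtain ⟨a, b, rfl, hab, hab1, hba1⟩ := hdiag _ hd
    have h0 : (b - a).val ≠ 0 := by
      intro h
      have := (ZMod.val_eq_zero _).mp h
      rw [sub_eq_zero] at this
      exact hab this.symm
    have hlt : (b - a).val < 2*n := ZMod.val_lt _
    have hvneg : (a - b).val = 2*n - (b - a).val := by
      rw [show a - b = -(b - a) by ring, ZMod.neg_val,
        if_neg (show ¬ b - a = 0 from fun h => hab (by rw [sub_eq_zero] at h; exact h.symm))]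
    have h1 : (b - a).val ≠ 1 := by
      intro h; apply hba1; apply ZMod.val_injective; rw [h, ZMod.val_one]
    have h1' : (b - a).val ≠ 2*n - 1 := by
      intro h; apply hab1; apply ZMod.val_injective; rw [hvneg, h, ZMod.val_one]; omega
    have hnn : (b - a).val ≠ n := by
      intro h
      exact hdia _ hd a (by rw [show b = a + (b - a) by ring, val_eq_n hn h])
    rcases lt_or_gt_of_ne hnn with h | h
    · exact ⟨a, b, rfl, by omega, by omega, by rw [hgab]; omega⟩
    · exact ⟨b, a, Sym2.eq_swap.symm, by omega, by omega, by rw [hgab]; omega⟩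
  obtain ⟨dm, hdm, hmax⟩ := Set.Finite.exists_maximalFor g S (Set.toFinite S) hS
  obtain ⟨x, y, hdmx, hk2, hk1, hgk⟩ := srep dm hdm
  refine ⟨x, fun e he hcr => ?_⟩
  obtain ⟨c, dd, hedd, hj2, hj1, hgj⟩ := srep e he
  have hjk : (dd - c).val ≤ (y - x).val := by
    by_contra hlt
    have := hmax he (by omega)
    omega
  rw [hedd] at hcr
  obtain ⟨hc1, hc2, hd1, hd2, hiff⟩ := cross_diam hn hcr
  set p := (c - x).val with hp
  set q := (dd - x).val with hqdef
  have hp0 : p ≠ 0 := fun h => hc1 (by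
    have := (ZMod.val_eq_zero (c - x)).mp h
    rw [sub_eq_zero] at this; exact this)
  have hq0 : q ≠ 0 := fun h => hd1 (by
    have := (ZMod.val_eq_zero (dd - x)).mp h
    rw [sub_eq_zero] at this; exact this)
  have hpn : p ≠ n := fun h =>
    hc2 (by rw [show c = x + (c - x) by ring, val_eq_n hn h])
  have hqn : q ≠ n := fun h =>
    hd2 (by rw [show dd = x + (dd - x) by ring, val_eq_n hn h])
  have hplt : p < 2*n := ZMod.val_lt _
  have hqlt : q < 2*n := ZMod.val_lt _
  have hmod : q = (p + (dd - c).val) % (2*n) := by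
    rw [hqdef, show dd - x = (c - x) + (dd - c) by ring, ZMod.val_add]
  rcases lt_or_gt_of_ne hpn with hplt' | hpgt
  · -- p < n : the vertex x + n lies strictly inside the arc (c, dd)
    have hqgt : ¬ (q < n) := hiff.mp hplt'
    have hqq : q = p + (dd - c).val := by
      rw [hmod, Nat.mod_eq_of_lt (by omega)]
    have hxc : ((x + (n : ZMod (2*n))) - c).val = n - p := by
      rw [show x + (n : ZMod (2*n)) - c = (n : ZMod (2*n)) + -(c - x) by ring,
        ZMod.val_add, ZMod.neg_val,
        if_neg (show ¬ c - x = 0 from fun h => hp0 (by rw [hp, h, ZMod.val_zero])), hvn]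
      rw [show n + (2*n - p) = (n - p) + 2*n by omega, Nat.add_mod_right,
        Nat.mod_eq_of_lt (by omega)]
    have hcross : Crosses s(c, dd) s(x + (n : ZMod (2*n)), y + (n : ZMod (2*n))) := by
      apply crosses_of hn
      · rw [show y + (n:ZMod (2*n)) - (x + (n:ZMod (2*n))) = y - x by ring]; exact hjk
      · rw [show y + (n:ZMod (2*n)) - (x + (n:ZMod (2*n))) = y - x by ring]; exact hk1
      · rw [hxc]; omega
      · rw [hxc]; omega
    have hno := hnc e he _ (hcs dm hdm)
    rw [hedd, hdmx] at hno
    simp only [Sym2.map_pair_eq] at hno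
    exact hno hcross
  · -- p > n : the vertex x lies strictly inside the arc (c, dd)
    have hqlt' : q < n := by
      by_contra hh
      exact absurd (hiff.mpr hh) (by omega)
    have hge : 2*n ≤ p + (dd - c).val := by
      by_contra hcon
      rw [hmod, Nat.mod_eq_of_lt (by omega)] at hqlt'
      omega
    have hqq : q = p + (dd - c).val - 2*n := by
      rw [hmod, Nat.mod_eq_sub_mod hge, Nat.mod_eq_of_lt (by omega)]
    have hxc : (x - c).val = 2*n - p := by
      rw [show x - c = -(c - x) by ring, ZMod.neg_val,
        if_neg (show ¬ c - x = 0 from fun h => hp0 (by rw [hp, h, ZMod.val_zero]))]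
    have hcross : Crosses s(c, dd) s(x, y) := by
      apply crosses_of hn hjk hk1
      · rw [hxc]; omega
      · rw [hxc]; omega
    have hno := hnc e he dm hdm
    rw [hedd, hdmx] at hno
    exact hno hcross
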